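/- Suppose ∫‖x‖² dρ(x) < ∞, let μ : ℝ → ℝ^m be a version of the conditional expectation of x given f, and let (φ_i)_{i∈ℕ} be a Hilbert basis of L²(γ) represented by Borel functions. Define c_i ∈ ℝ^m by c_i = ∫_{ℝ^m} x · φ_i(f(x)) dρ(x) for i ∈ ℕ. Then the family i ↦ c_i c_iᵀ is entrywise summable and ∫_ℝ μ(y) μ(y)ᵀ dγ(y) = Σ_{i=0}^∞ c_i c_iᵀ. -/

import Mathlib

open MeasureTheory

lemma memL2_condexp {α : Type*} {m m0 : MeasurableSpace α} (hm : m ≤ m0) {μ : Measure α}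
    [IsFiniteMeasure μ] {g : α → ℝ} (hg : MemLp g 2 μ) : MemLp (μ[g|m]) 2 μ := by
  have h : (fun x => (condExpL2 ℝ ℝ hm (hg.toLp g) : α → ℝ) x) =ᵐ[μ] μ[g|m] := by
    refine ae_eq_condExp_of_forall_setIntegral_eq hm (hg.integrable one_le_two)
      (fun s hs hμs => integrableOn_condExpL2_of_measure_ne_top hm hμs.ne _)
      (fun s hs hμs => ?_) (aestronglyMeasurable_condExpL2 hm _)
    rw [integral_condExpL2_eq hm (hg.toLp g) hs hμs.ne]
    exact setIntegral_congr_ae (hm s hs) ((hg.coeFn_toLp).mono fun x hx _ => hx)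
  exact (Lp.memLp _).ae_eq h


/-- If `∫ ‖x‖² dρ < ∞`, `μ` is a version of the conditional expectation of `x`
given `f`, and `(φ i)` is a Hilbert basis of `L²(γ)` (with `γ = f_*ρ`) represented by Borel
functions, then the vectors `c i` with `(c i) j = ∫ x j * φ i (f x) dρ` satisfy: the family
`i ↦ c i (c i)ᵀ` is entrywise summable and `∫ μ y μ yᵀ dγ = ∑' i, c i (c i)ᵀ` entrywise. -/
theorem stmt3 (m : ℕ) (hm : 1 ≤ m)
    (ρ : Measure (EuclideanSpace ℝ (Fin m))) [IsProbabilityMeasure ρ]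
    (f : EuclideanSpace ℝ (Fin m) → ℝ) (hf : Measurable f)
    (γ : Measure ℝ) (hγ : γ = Measure.map f ρ)
    (hx2 : Integrable (fun x => ‖x‖ ^ 2) ρ)
    (μ : ℝ → EuclideanSpace ℝ (Fin m)) (hμ : Measurable μ)
    (hcond : ∀ j : Fin m,
      (fun x => μ (f x) j) =ᵐ[ρ] ρ[fun x => x j | MeasurableSpace.comap f (borel ℝ)])
    (φ : ℕ → ℝ → ℝ) (hφmeas : ∀ i, Measurable (φ i))
    (hφ : ∀ i, MemLp (φ i) 2 γ)
    (b : HilbertBasis ℕ ℝ (Lp ℝ 2 γ))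
    (hb : ∀ i, (b i : Lp ℝ 2 γ) = (hφ i).toLp (φ i))
    (c : ℕ → Fin m → ℝ)
    (hc : ∀ i j, c i j = ∫ x, x j * φ i (f x) ∂ρ) :
    ∀ p q : Fin m,
      Summable (fun i => c i p * c i q) ∧
      ∫ y, μ y p * μ y q ∂γ = ∑' i, c i p * c i q := by
  have hγprob : IsProbabilityMeasure γ := by
    rw [hγ]; exact Measure.isProbabilityMeasure_map hf.aemeasurable
  have hmle : MeasurableSpace.comap f (borel ℝ)
      ≤ (inferInstance : MeasurableSpace (EuclideanSpace ℝ (Fin m))) := hf.comap_le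
  -- coordinates are in L²(ρ)
  have hnorm : MemLp (fun x : EuclideanSpace ℝ (Fin m) => ‖x‖) 2 ρ :=
    (memLp_two_iff_integrable_sq measurable_norm.aestronglyMeasurable).2 hx2
  have hxj : ∀ j : Fin m, MemLp (fun x : EuclideanSpace ℝ (Fin m) => x j) 2 ρ := by
    intro j
    refine hnorm.of_le (((measurable_pi_apply j).comp (WithLp.measurable_ofLp 2 _)).aestronglyMeasurable)
      (Filter.Eventually.of_forall fun x => ?_)
    rw [norm_norm]
    rw [EuclideanSpace.norm_eq, ← Real.sqrt_sq (norm_nonneg (x j))]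
    exact Real.sqrt_le_sqrt (Finset.single_le_sum (f := fun i => ‖x i‖ ^ 2)
      (fun i _ => sq_nonneg _) (Finset.mem_univ j))
  -- μ_j ∘ f is in L²(ρ), hence μ_j ∈ L²(γ)
  have hcj : ∀ j, MemLp (fun x => μ (f x) j) 2 ρ := fun j =>
    (memL2_condexp hmle (hxj j)).ae_eq (hcond j).symm
  have hμj : ∀ j, MemLp (fun y => μ y j) 2 γ := by
    intro j
    rw [hγ]
    exact (memLp_map_measure_iff (g := fun y => μ y j)
      (((measurable_pi_apply j).comp (WithLp.measurable_ofLp 2 _)).comp hμ).aestronglyMeasurable hf.aemeasurable).mpr (hcj j)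
  -- the L² elements
  set M : Fin m → Lp ℝ 2 γ := fun j => (hμj j).toLp _ with hM
  -- inner products with basis vectors are c i j
  have hinner : ∀ (j : Fin m) (i : ℕ), (inner ℝ (M j) (b i) : ℝ) = c i j := by
    intro j i
    rw [hb i, L2.inner_def]
    have h1 : ∫ y, (inner ℝ ((M j : ℝ → ℝ) y) (((hφ i).toLp (φ i) : Lp ℝ 2 γ) y) : ℝ) ∂γ
        = ∫ y, μ y j * φ i y ∂γ := by
      refine integral_congr_ae ?_
      filter_upwards [(hμj j).coeFn_toLp, (hφ i).coeFn_toLp] with y h1 h2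
      rw [show ((M j : ℝ → ℝ) y) = μ y j from h1, h2]
      simp [RCLike.inner_apply, mul_comm]
    have ham : AEStronglyMeasurable (fun y => μ y j * φ i y) (Measure.map f ρ) := by
      rw [← hγ]; exact (hμj j).aestronglyMeasurable.mul (hφ i).aestronglyMeasurable
    rw [h1, hγ, integral_map hf.aemeasurable ham, hc i j]
    -- now: ∫ x, μ (f x) j * φ i (f x) ∂ρ = ∫ x, x j * φ i (f x) ∂ρ
    set g : EuclideanSpace ℝ (Fin m) → ℝ := fun x => φ i (f x) with hg
    have hfm : @Measurable _ _ (MeasurableSpace.comap f (borel ℝ)) (borel ℝ) f :=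
      measurable_iff_comap_le.mpr le_rfl
    have hgsm : StronglyMeasurable[MeasurableSpace.comap f (borel ℝ)] g :=
      ((hφmeas i).comp hfm).stronglyMeasurable
    have hgL2 : MemLp g 2 ρ := by
      have := (hφ i); rw [hγ] at this
      exact (memLp_map_measure_iff (by rw [← hγ]; exact (hφ i).aestronglyMeasurable)
        hf.aemeasurable).mp this
    have hmul : Integrable (g * fun x : EuclideanSpace ℝ (Fin m) => x j) ρ := by
      have h := (hxj j).smul (φ := g) hgL2
        (r := 1)
      rw [memLp_one_iff_integrable] at h
      exact h
    have hpull := condExp_mul_of_stronglyMeasurable_left (μ := ρ) hgsm hmul ((hxj j).integrable one_le_two)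
    calc ∫ x, μ (f x) j * g x ∂ρ
        = ∫ x, g x * (ρ[fun x => x j | MeasurableSpace.comap f (borel ℝ)]) x ∂ρ := by
          refine integral_congr_ae ?_
          filter_upwards [hcond j] with x hx
          rw [hx, mul_comm]
      _ = ∫ x, (ρ[g * (fun x : EuclideanSpace ℝ (Fin m) => x j) | MeasurableSpace.comap f (borel ℝ)]) x ∂ρ := by
          refine (integral_congr_ae ?_).symm
          filter_upwards [hpull] with x hx
          rw [hx, Pi.mul_apply]
      _ = ∫ x, (g * fun x : EuclideanSpace ℝ (Fin m) => x j) x ∂ρ := integral_condExp hmle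
      _ = ∫ x, x j * φ i (f x) ∂ρ := by
          refine integral_congr_ae (Filter.Eventually.of_forall fun x => ?_)
          rw [Pi.mul_apply, mul_comm]
  -- inner product of M p and M q
  have hMM : ∀ p q : Fin m, (inner ℝ (M p) (M q) : ℝ) = ∫ y, μ y p * μ y q ∂γ := by
    intro p q
    rw [L2.inner_def]
    refine integral_congr_ae ?_
    filter_upwards [(hμj p).coeFn_toLp, (hμj q).coeFn_toLp] with y h1 h2
    rw [show ((M p : ℝ → ℝ) y) = μ y p from h1, show ((M q : ℝ → ℝ) y) = μ y q from h2]
    simp [RCLike.inner_apply, mul_comm]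
  intro p q
  have hfun : (fun i => c i p * c i q)
      = fun i => (inner ℝ (M p) (b i) : ℝ) * (inner ℝ (b i) (M q) : ℝ) := by
    funext i
    rw [hinner p i, real_inner_comm, hinner q i]
  constructor
  · rw [hfun]; exact b.summable_inner_mul_inner (M p) (M q)
  · rw [hfun, b.tsum_inner_mul_inner (M p) (M q), hMM p q]
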